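/- Characterization of match-preserving permutations without unmatched units (Proposition 1): let T and C be finite disjoint sets of units with |T| = |C| and all propensity scores distinct, let μ : T → C be an optimal pair matching, and let S be a subset of the K matched pairs {(t, μ(t)) : t ∈ T}. Form the relabeled study in which, for each pair in S, the treated and control roles are exchanged, giving a new treated set T′ and new control set C′ = (T ∪ C) ∖ T′. Then the same grouping into pairs {t, μ(t)} is an optimal pair matching of T′ to C′ if and only if S is a union of connected components of the overlap graph of the pairs {(t, μ(t)) : t ∈ T}. -/

import Mathlib

open MeasureTheory

/-- `μ` is a pair matching of the treated units `T` to the control units `C`: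
an injection (on `T`) mapping each treated unit to a control unit. -/
def IsMatching {α : Type*} (T C : Finset α) (μ : α → α) : Prop :=
  Set.InjOn μ ↑T ∧ ∀ t ∈ T, μ t ∈ C

/-- The cost of a pair matching: the total absolute propensity-score
discrepancy `Σ_{t ∈ T} |λ_t − λ_{μ(t)}|`. -/
noncomputable def matchCost {α : Type*} (score : α → ℝ) (T : Finset α) (μ : α → α) : ℝ :=
  ∑ t ∈ T, |score t - score (μ t)|

/-- `μ` is an optimal pair matching of `T` to `C`: it is a pair matching and
it minimizes the cost over all pair matchings of `T` to `C`. -/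
def IsOptimalMatching {α : Type*} (score : α → ℝ) (T C : Finset α) (μ : α → α) : Prop :=
  IsMatching T C μ ∧
    ∀ ν : α → α, IsMatching T C ν → matchCost score T μ ≤ matchCost score T ν

/-- Two matched pairs, with respective score pairs `(x1, y1)` and `(x2, y2)`, are
overlapping if, writing each pair's scores as `(hᵢ, ℓᵢ)` with `hᵢ > ℓᵢ`,
either `h1 > h2 > ℓ1` or `h2 > h1 > ℓ2`. -/
def Overlapping (x1 y1 x2 y2 : ℝ) : Prop :=
  (max x1 y1 > max x2 y2 ∧ max x2 y2 > min x1 y1) ∨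
  (max x2 y2 > max x1 y1 ∧ max x1 y1 > min x2 y2)

/-- The overlap graph of the matched pairs `{(t, μ t) : t ∈ T}`: its vertices are
the matched pairs (identified with their treated units `t ∈ T`), with an edge
between two distinct pairs exactly when they are overlapping. -/
def overlapGraph {α : Type*} (score : α → ℝ) (T : Finset α) (μ : α → α) :
    SimpleGraph {x : α // x ∈ T} :=
  SimpleGraph.fromRel fun p q =>
    Overlapping (score ↑p) (score (μ ↑p)) (score ↑q) (score (μ ↑q))



section Aux

/-- Indicator function of the open interval spanned by `a` and `b`. -/
noncomputable def pairFn (a b : ℝ) : ℝ → ℝ :=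
  (Set.Ioo (min a b) (max a b)).indicator (fun _ => 1)

lemma pairFn_apply (a b x : ℝ) :
    pairFn a b x = if min a b < x ∧ x < max a b then 1 else 0 := by
  simp [pairFn, Set.indicator_apply, Set.mem_Ioo]

lemma pairFn_nonneg (a b x : ℝ) : 0 ≤ pairFn a b x := by
  rw [pairFn_apply]; split <;> norm_num

lemma pairFn_comm (a b : ℝ) : pairFn a b = pairFn b a := by
  simp [pairFn, min_comm, max_comm]

lemma pairFn_integrable (a b : ℝ) : Integrable (pairFn a b) := by
  rw [pairFn, MeasureTheory.integrable_indicator_iff measurableSet_Ioo]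
  exact integrableOn_const measure_Ioo_lt_top.ne

lemma pairFn_integral (a b : ℝ) : ∫ x, pairFn a b x = |a - b| := by
  rw [pairFn, MeasureTheory.integral_indicator_const (1:ℝ) measurableSet_Ioo, Real.volume_real_Ioo_of_le min_le_max,
    smul_eq_mul, mul_one,
    max_sub_min_eq_abs, abs_sub_comm]

/-- The crossing-number function of a matching: at each point `x`, the number of
matched pairs whose open interval contains `x`. -/
noncomputable def Nfun {α : Type*} (score : α → ℝ) (A : Finset α) (m : α → α) : ℝ → ℝ :=
  fun x => ∑ t ∈ A, pairFn (score t) (score (m t)) x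

lemma Nfun_integrable {α : Type*} (score : α → ℝ) (A : Finset α) (m : α → α) :
    Integrable (Nfun score A m) := by
  apply MeasureTheory.integrable_finset_sum
  exact fun t _ => pairFn_integrable _ _

lemma Nfun_integral {α : Type*} (score : α → ℝ) (A : Finset α) (m : α → α) :
    ∫ x, Nfun score A m x = matchCost score A m := by
  unfold Nfun matchCost
  rw [MeasureTheory.integral_finset_sum _ (fun t _ => pairFn_integrable _ _)]
  exact Finset.sum_congr rfl fun t _ => pairFn_integral _ _

lemma chi_abs {a b x : ℝ} (ha : a ≠ x) (hb : b ≠ x) :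
    |(if a < x then (1:ℝ) else 0) - (if b < x then 1 else 0)| = pairFn a b x := by
  rw [pairFn_apply]
  rcases ha.lt_or_gt with h | h <;> rcases hb.lt_or_gt with h' | h'
  · rw [if_pos h, if_pos h', if_neg (by rintro ⟨-, h2⟩; exact absurd h2 (max_lt h h').not_gt)]
    simp
  · rw [if_pos h, if_neg (not_lt.2 h'.le),
      if_pos ⟨lt_of_le_of_lt (min_le_left a b) h, lt_of_lt_of_le h' (le_max_right a b)⟩]
    simp
  · rw [if_neg (not_lt.2 h.le), if_pos h',
      if_pos ⟨lt_of_le_of_lt (min_le_right a b) h', lt_of_lt_of_le h (le_max_left a b)⟩]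
    simp
  · rw [if_neg (not_lt.2 h.le), if_neg (not_lt.2 h'.le),
      if_neg (by rintro ⟨h1, -⟩; exact absurd h1 (lt_min h h').not_gt)]
    simp

lemma swap_improve {a1 b1 a2 b2 x : ℝ} (h1 : a1 < x) (h2 : x < b1) (h3 : b2 < x) (h4 : x < a2) :
    |a1 - b2| + |a2 - b1| < |a1 - b1| + |a2 - b2| := by
  have e1 : |a1 - b1| = b1 - a1 := by rw [abs_sub_comm]; exact abs_of_pos (by linarith)
  have e2 : |a2 - b2| = a2 - b2 := abs_of_pos (by linarith)
  rcases abs_cases (a1 - b2) with ⟨h5, -⟩ | ⟨h5, -⟩ <;>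
    rcases abs_cases (a2 - b1) with ⟨h6, -⟩ | ⟨h6, -⟩ <;> linarith

/-- In an optimal matching, no two pairs cross a common point with opposite orientations. -/
lemma no_opposite {α : Type*} [DecidableEq α] (score : α → ℝ) (A B : Finset α) (m : α → α)
    (hopt : IsOptimalMatching score A B m) {u v : α} {x : ℝ}
    (hu : u ∈ A) (hv : v ∈ A)
    (h1 : score u < x) (h2 : x < score (m u)) (h3 : score (m v) < x) (h4 : x < score v) :
    False := by
  have huv : u ≠ v := by intro h; subst h; linarith
  have hswapA : ∀ a ∈ A, Equiv.swap u v a ∈ A := by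
    intro a ha
    rcases eq_or_ne a u with rfl | hau
    · rw [Equiv.swap_apply_left]; exact hv
    rcases eq_or_ne a v with rfl | hav
    · rw [Equiv.swap_apply_right]; exact hu
    · rw [Equiv.swap_apply_of_ne_of_ne hau hav]; exact ha
  have hmatch : IsMatching A B (m ∘ Equiv.swap u v) := by
    constructor
    · intro a ha b hb hab
      exact (Equiv.swap u v).injective (hopt.1.1 (hswapA a ha) (hswapA b hb) hab)
    · intro a ha; exact hopt.1.2 _ (hswapA a ha)
  have hle := hopt.2 _ hmatch
  have hdecomp : ∀ g : α → ℝ,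
      ∑ a ∈ A, g a = g u + (g v + ∑ a ∈ (A.erase u).erase v, g a) := by
    intro g
    rw [Finset.add_sum_erase _ g (Finset.mem_erase.2 ⟨huv.symm, hv⟩), Finset.add_sum_erase _ g hu]
  have key : matchCost score A (m ∘ Equiv.swap u v) < matchCost score A m := by
    unfold matchCost
    rw [hdecomp (fun t => |score t - score ((m ∘ Equiv.swap u v) t)|),
      hdecomp (fun t => |score t - score (m t)|)]
    have htail : ∑ a ∈ (A.erase u).erase v, |score a - score ((m ∘ Equiv.swap u v) a)|
        = ∑ a ∈ (A.erase u).erase v, |score a - score (m a)| := by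
      refine Finset.sum_congr rfl fun a ha => ?_
      have hav : a ≠ v := (Finset.mem_erase.1 ha).1
      have hau : a ≠ u := (Finset.mem_erase.1 (Finset.mem_erase.1 ha).2).1
      simp [Equiv.swap_apply_of_ne_of_ne hau hav]
    have hu' : (m ∘ Equiv.swap u v) u = m v := by simp
    have hv' : (m ∘ Equiv.swap u v) v = m u := by simp
    simp only [hu', hv', htail]
    have := swap_improve h1 h2 h3 h4
    linarith
  linarith


/-- Two overlapping pairs have a common interior point. -/
lemma overlap_common {a b c d : ℝ} (hab : a ≠ b) (hcd : c ≠ d) (h : Overlapping a b c d) :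
    ∃ x, min a b < x ∧ x < max a b ∧ min c d < x ∧ x < max c d := by
  have h1 : min a b < max a b := min_lt_max.2 hab
  have h2 : min c d < max c d := min_lt_max.2 hcd
  rcases h with ⟨hx, hy⟩ | ⟨hx, hy⟩
  · refine ⟨(max (min a b) (min c d) + max c d) / 2, ?_, ?_, ?_, ?_⟩ <;>
      [skip; skip; skip; skip] <;>
      have l1 : min a b ≤ max (min a b) (min c d) := le_max_left _ _ <;>
      have l2 : min c d ≤ max (min a b) (min c d) := le_max_right _ _ <;>
      have l3 : max (min a b) (min c d) < max c d := max_lt hy h2 <;>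
      linarith
  · refine ⟨(max (min a b) (min c d) + max a b) / 2, ?_, ?_, ?_, ?_⟩ <;>
      have l1 : min a b ≤ max (min a b) (min c d) := le_max_left _ _ <;>
      have l2 : min c d ≤ max (min a b) (min c d) := le_max_right _ _ <;>
      have l3 : max (min a b) (min c d) < max a b := max_lt h1 hy <;>
      linarith

/-- At any point avoiding all scores, the crossing number of a perfect matching
is at least the treated/control count discrepancy. -/
lemma lower_bound {α : Type*} [DecidableEq α] (score : α → ℝ) (A B : Finset α) (m : α → α)
    (hm : IsMatching A B m) (himg : A.image m = B) {x : ℝ}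
    (hx : ∀ u, u ∈ A ∪ B → score u ≠ x) :
    |(∑ u ∈ A, if score u < x then (1:ℝ) else 0) -
      ∑ u ∈ B, if score u < x then (1:ℝ) else 0| ≤ Nfun score A m x := by
  have hB : (∑ u ∈ B, if score u < x then (1:ℝ) else 0)
      = ∑ u ∈ A, if score (m u) < x then (1:ℝ) else 0 := by
    rw [← himg]
    exact Finset.sum_image fun a ha b hb hab => hm.1 ha hb hab
  rw [hB, ← Finset.sum_sub_distrib]
  refine le_trans (Finset.abs_sum_le_sum_abs _ _) (le_of_eq ?_)
  refine Finset.sum_congr rfl fun u hu => ?_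
  exact chi_abs (hx u (Finset.mem_union_left _ hu))
    (hx (m u) (Finset.mem_union_right _ (himg ▸ Finset.mem_image_of_mem m hu)))

lemma cross_cases {a b x : ℝ} (h1 : min a b < x) (h2 : x < max a b) :
    (a < x ∧ x < b) ∨ (b < x ∧ x < a) := by
  rcases lt_trichotomy a x with h | rfl | h
  · left
    refine ⟨h, ?_⟩
    rcases max_cases a b with ⟨e, _⟩ | ⟨e, _⟩
    · rw [e] at h2; linarith
    · rwa [e] at h2
  · exfalso
    rcases min_lt_iff.1 h1 with h | h
    · exact lt_irrefl _ h
    · rcases lt_max_iff.1 h2 with h' | h' <;> linarith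
  · right
    refine ⟨?_, h⟩
    rcases min_cases a b with ⟨e, _⟩ | ⟨e, _⟩
    · rw [e] at h1; linarith
    · rwa [e] at h1

open scoped Classical in
/-- The canonical role-exchanging map: sends `μ s ↦ s` for `s ∈ S` and is `μ` elsewhere. -/
noncomputable def flipMap {α : Type*} (S : Finset α) (μ : α → α) : α → α :=
  fun y => if h : ∃ s ∈ S, μ s = y then h.choose else μ y

lemma flipMap_of_not {α : Type*} {S : Finset α} {μ : α → α} {y : α}
    (h : ¬ ∃ s ∈ S, μ s = y) : flipMap S μ y = μ y := by
  unfold flipMap; rw [dif_neg h]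

lemma flipMap_mu {α : Type*} {S : Finset α} {μ : α → α}
    (hinj : ∀ a ∈ S, ∀ b ∈ S, μ a = μ b → a = b) {s : α} (hs : s ∈ S) :
    flipMap S μ (μ s) = s := by
  have hex : ∃ t ∈ S, μ t = μ s := ⟨s, hs, rfl⟩
  unfold flipMap
  rw [dif_pos hex]
  obtain ⟨h1, h2⟩ := hex.choose_spec
  exact hinj _ h1 _ hs h2
end Aux

/-- Characterization of match-preserving permutations without unmatched units
(Proposition 1): let `T` and `C` be finite disjoint sets of units with
`|T| = |C|` and distinct propensity scores, let `μ` be an optimal pair matching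
of `T` to `C`, and let `S ⊆ T` index a subset of the matched pairs. Exchange the
treated and control roles within each pair in `S`, giving the new treated set
`T′ = (T \ S) ∪ μ(S)` and new control set `C′ = (T ∪ C) \ T′`. Then the same
grouping into pairs `{t, μ t}` (i.e. any `ν` agreeing with `μ` on unflipped
pairs and mapping `μ t ↦ t` on flipped pairs) is an optimal pair matching of
`T′` to `C′` if and only if `S` is a union of connected components of the
overlap graph of the pairs (i.e. `S` is closed under reachability). -/
theorem match_preserving_iff_union_of_components {α : Type*} [DecidableEq α]
    (score : α → ℝ) (T C : Finset α)
    (hdisj : Disjoint T C) (hcard : T.card = C.card)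
    (hinj : Set.InjOn score (↑T ∪ ↑C))
    (μ : α → α) (hopt : IsOptimalMatching score T C μ)
    (S : Finset α) (hS : S ⊆ T) :
    (∀ ν : α → α,
        (∀ t ∈ T \ S, ν t = μ t) → (∀ t ∈ S, ν (μ t) = t) →
        IsOptimalMatching score ((T \ S) ∪ S.image μ)
          ((T ∪ C) \ ((T \ S) ∪ S.image μ)) ν)
      ↔ (∀ p q : {x : α // x ∈ T}, ↑p ∈ S →
            (overlapGraph score T μ).Reachable p q → ↑q ∈ S) := by
  classical
  have hinjμ : Set.InjOn μ ↑T := hopt.1.1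
  have hmapμ : ∀ t ∈ T, μ t ∈ C := hopt.1.2
  set T' : Finset α := (T \ S) ∪ S.image μ with hT'
  set C' : Finset α := (T ∪ C) \ T' with hC'
  have hinjμS : ∀ a ∈ S, ∀ b ∈ S, μ a = μ b → a = b := fun a ha b hb h =>
    hinjμ (Finset.mem_coe.2 (hS ha)) (Finset.mem_coe.2 (hS hb)) h
  have himg : T.image μ = C := by
    refine Finset.eq_of_subset_of_card_le (fun c hc => ?_) ?_
    · obtain ⟨t, ht, rfl⟩ := Finset.mem_image.1 hc; exact hmapμ t ht
    · rw [Finset.card_image_of_injOn hinjμ]; exact le_of_eq hcard.symm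
  have hdisj2 : Disjoint (T \ S) (S.image μ) := by
    refine Finset.disjoint_left.2 fun a ha hb => ?_
    obtain ⟨s, hs, rfl⟩ := Finset.mem_image.1 hb
    exact Finset.disjoint_left.1 hdisj (Finset.mem_sdiff.1 ha).1 (hmapμ s (hS hs))
  have hSsubC' : ∀ s ∈ S, s ∈ C' := by
    intro s hs
    rw [hC', Finset.mem_sdiff]
    refine ⟨Finset.mem_union_left _ (hS hs), fun hmem => ?_⟩
    rcases Finset.mem_union.1 hmem with h | h
    · exact (Finset.mem_sdiff.1 h).2 hs
    · obtain ⟨s', hs', he⟩ := Finset.mem_image.1 h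
      exact Finset.disjoint_left.1 hdisj (hS hs) (he ▸ hmapμ s' (hS hs'))
  have hμC' : ∀ t ∈ T \ S, μ t ∈ C' := by
    intro t ht
    obtain ⟨htT, htS⟩ := Finset.mem_sdiff.1 ht
    rw [hC', Finset.mem_sdiff]
    refine ⟨Finset.mem_union_right _ (hmapμ t htT), fun hmem => ?_⟩
    rcases Finset.mem_union.1 hmem with h | h
    · exact Finset.disjoint_left.1 hdisj (Finset.mem_sdiff.1 h).1 (hmapμ t htT)
    · obtain ⟨s', hs', he⟩ := Finset.mem_image.1 h
      exact htS (hinjμ (Finset.mem_coe.2 (hS hs')) (Finset.mem_coe.2 htT) he ▸ hs')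
  have hC'eq : C' = S ∪ (T \ S).image μ := by
    ext a
    constructor
    · intro ha
      obtain ⟨haTC, haT'⟩ := Finset.mem_sdiff.1 ha
      rcases Finset.mem_union.1 haTC with h | h
      · by_cases haS : a ∈ S
        · exact Finset.mem_union_left _ haS
        · exact absurd (Finset.mem_union_left _ (Finset.mem_sdiff.2 ⟨h, haS⟩)) haT'
      · obtain ⟨t, ht, rfl⟩ := Finset.mem_image.1 (himg ▸ h)
        by_cases htS : t ∈ S
        · exact absurd (Finset.mem_union_right _ (Finset.mem_image_of_mem μ htS)) haT'
        · exact Finset.mem_union_right _ (Finset.mem_image_of_mem μ (Finset.mem_sdiff.2 ⟨ht, htS⟩))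
    · intro ha
      rcases Finset.mem_union.1 ha with h | h
      · exact hSsubC' _ h
      · obtain ⟨t, ht, rfl⟩ := Finset.mem_image.1 h
        exact hμC' t ht
  have hdisj3 : Disjoint S ((T \ S).image μ) := by
    refine Finset.disjoint_left.2 fun a ha hb => ?_
    obtain ⟨t, ht, rfl⟩ := Finset.mem_image.1 hb
    exact Finset.disjoint_left.1 hdisj (hS ha) (hmapμ t (Finset.mem_sdiff.1 ht).1)
  have hT'sub : T' ⊆ T ∪ C := by
    rw [hT']
    refine Finset.union_subset (Finset.sdiff_subset.trans Finset.subset_union_left) ?_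
    intro a ha
    obtain ⟨s, hs, rfl⟩ := Finset.mem_image.1 ha
    exact Finset.mem_union_right _ (hmapμ s (hS hs))
  have hcardT' : T'.card = T.card := by
    rw [hT', Finset.card_union_of_disjoint hdisj2,
      Finset.card_image_of_injOn (hinjμ.mono (Finset.coe_subset.2 hS)),
      Finset.card_sdiff_add_card_eq_card hS]
  have hcardC' : C'.card = T'.card := by
    rw [hC', Finset.card_sdiff_of_subset hT'sub, Finset.card_union_of_disjoint hdisj, hcardT']
    omega
  have hsne : ∀ t ∈ T, score t ≠ score (μ t) := by
    intro t ht h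
    have := hinj (Or.inl (Finset.mem_coe.2 ht)) (Or.inr (Finset.mem_coe.2 (hmapμ t ht))) h
    exact Finset.disjoint_left.1 hdisj ht (this ▸ hmapμ t ht)
  -- adjacency from a common crossing point
  have hadj : ∀ t t0, (ht : t ∈ T) → (ht0 : t0 ∈ T) → t ≠ t0 → ∀ x : ℝ,
      min (score t) (score (μ t)) < x → x < max (score t) (score (μ t)) →
      min (score t0) (score (μ t0)) < x → x < max (score t0) (score (μ t0)) →
      (overlapGraph score T μ).Adj ⟨t, ht⟩ ⟨t0, ht0⟩ := by
    intro t t0 ht ht0 hne x h1 h2 h3 h4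
    have hmem : ∀ u ∈ T, (u : α) ∈ (↑T ∪ ↑C : Set α) := fun u hu => Or.inl (Finset.mem_coe.2 hu)
    have hmem' : ∀ u ∈ T, μ u ∈ (↑T ∪ ↑C : Set α) :=
      fun u hu => Or.inr (Finset.mem_coe.2 (hmapμ u hu))
    have hnsc : score t ≠ score t0 := fun h => hne (hinj (hmem t ht) (hmem t0 ht0) h)
    have hnsc2 : score (μ t) ≠ score (μ t0) := fun h =>
      hne (hinjμ (Finset.mem_coe.2 ht) (Finset.mem_coe.2 ht0) (hinj (hmem' t ht) (hmem' t0 ht0) h))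
    have hnsc3 : score t ≠ score (μ t0) := fun h => by
      have := hinj (hmem t ht) (hmem' t0 ht0) h
      exact Finset.disjoint_left.1 hdisj ht (this ▸ hmapμ t0 ht0)
    have hnsc4 : score (μ t) ≠ score t0 := fun h => by
      have := hinj (hmem' t ht) (hmem t0 ht0) h
      exact Finset.disjoint_left.1 hdisj ht0 (this ▸ hmapμ t ht)
    have hmaxne : max (score t) (score (μ t)) ≠ max (score t0) (score (μ t0)) := by
      rcases max_choice (score t) (score (μ t)) with e | e <;>
        rcases max_choice (score t0) (score (μ t0)) with e' | e' <;> rw [e, e'] <;>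
        first
          | exact hnsc | exact hnsc2 | exact hnsc3 | exact hnsc4
    have hov : Overlapping (score t) (score (μ t)) (score t0) (score (μ t0)) := by
      rcases hmaxne.lt_or_gt with h | h
      · exact Or.inr ⟨h, lt_trans h3 h2⟩
      · exact Or.inl ⟨h, lt_trans h1 h4⟩
    rw [overlapGraph, SimpleGraph.fromRel_adj]
    exact ⟨fun h => hne (congrArg Subtype.val h), Or.inl hov⟩
  constructor
  · -- optimality for all ν  →  S closed under reachability
    intro H p q hpS hreach
    have hstep : ∀ u v : {x : α // x ∈ T},
        (overlapGraph score T μ).Adj u v → ↑u ∈ S → ↑v ∈ S := by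
      intro u v huv huS
      by_contra hvS
      set ν₀ : α → α := flipMap S μ with hν₀
      have hν1 : ∀ t ∈ T \ S, ν₀ t = μ t := by
        intro t ht
        refine flipMap_of_not ?_
        rintro ⟨s, hs, rfl⟩
        exact Finset.disjoint_left.1 hdisj (Finset.mem_sdiff.1 ht).1 (hmapμ s (hS hs))
      have hν2 : ∀ s ∈ S, ν₀ (μ s) = s := fun s hs => flipMap_mu hinjμS hs
      have hopt₀ : IsOptimalMatching score T' C' ν₀ := H ν₀ hν1 hν2
      rw [overlapGraph, SimpleGraph.fromRel_adj] at huv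
      obtain ⟨hne, hov⟩ := huv
      have hne' : (↑u : α) ≠ ↑v := fun h => hne (Subtype.ext h)
      have hov' : Overlapping (score ↑u) (score (μ ↑u)) (score ↑v) (score (μ ↑v)) := by
        rcases hov with h | h
        · exact h
        · exact Or.symm h
      obtain ⟨x, hx1, hx2, hx3, hx4⟩ := overlap_common (hsne _ u.2) (hsne _ v.2) hov'
      have hvT' : (↑v : α) ∈ T' := Finset.mem_union_left _ (Finset.mem_sdiff.2 ⟨v.2, hvS⟩)
      have huT' : μ ↑u ∈ T' := Finset.mem_union_right _ (Finset.mem_image_of_mem μ huS)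
      have hνv : ν₀ ↑v = μ ↑v := hν1 _ (Finset.mem_sdiff.2 ⟨v.2, hvS⟩)
      have hνu : ν₀ (μ ↑u) = ↑u := hν2 _ huS
      rcases cross_cases hx1 hx2 with ⟨ha, hb⟩ | ⟨ha, hb⟩ <;>
        rcases cross_cases hx3 hx4 with ⟨ha', hb'⟩ | ⟨ha', hb'⟩
      · exact no_opposite score T' C' ν₀ hopt₀ hvT' huT' ha'
          (show x < score (ν₀ ↑v) by rw [hνv]; exact hb')
          (show score (ν₀ (μ ↑u)) < x by rw [hνu]; exact ha) hb
      · exact no_opposite score T C μ hopt u.2 v.2 ha hb ha' hb'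
      · exact no_opposite score T C μ hopt v.2 u.2 ha' hb' ha hb
      · exact no_opposite score T' C' ν₀ hopt₀ huT' hvT' ha
          (show x < score (ν₀ (μ ↑u)) by rw [hνu]; exact hb)
          (show score (ν₀ ↑v) < x by rw [hνv]; exact ha') hb'
    obtain ⟨w⟩ := hreach
    have hwalk : ∀ (u v : {x : α // x ∈ T}) (w : (overlapGraph score T μ).Walk u v),
        ↑u ∈ S → ↑v ∈ S := by
      intro u v w
      induction w with
      | nil => exact id
      | cons h w ih => exact fun hu => ih (hstep _ _ h hu)
    exact hwalk p q w hpS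
  · -- S closed under reachability → every compatible ν is optimal
    intro hclosed ν hν1 hν2
    have hmatchν : IsMatching T' C' ν := by
      constructor
      · intro a ha b hb hab
        rw [Finset.mem_coe, hT'] at ha hb
        rcases Finset.mem_union.1 ha with ha' | ha' <;> rcases Finset.mem_union.1 hb with hb' | hb'
        · rw [hν1 a ha', hν1 b hb'] at hab
          exact hinjμ (Finset.mem_coe.2 (Finset.mem_sdiff.1 ha').1)
            (Finset.mem_coe.2 (Finset.mem_sdiff.1 hb').1) hab
        · obtain ⟨s, hs, rfl⟩ := Finset.mem_image.1 hb'
          rw [hν1 a ha', hν2 s hs] at hab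
          have h1 : μ a ∈ C := hmapμ a (Finset.mem_sdiff.1 ha').1
          rw [hab] at h1
          exact absurd h1 (Finset.disjoint_left.1 hdisj (hS hs))
        · obtain ⟨s, hs, rfl⟩ := Finset.mem_image.1 ha'
          rw [hν2 s hs, hν1 b hb'] at hab
          have h1 : μ b ∈ C := hmapμ b (Finset.mem_sdiff.1 hb').1
          rw [← hab] at h1
          exact absurd h1 (Finset.disjoint_left.1 hdisj (hS hs))
        · obtain ⟨s, hs, rfl⟩ := Finset.mem_image.1 ha'
          obtain ⟨s', hs', rfl⟩ := Finset.mem_image.1 hb'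
          rw [hν2 s hs, hν2 s' hs'] at hab
          rw [hab]
      · intro t ht
        rcases Finset.mem_union.1 ht with h | h
        · rw [hν1 t h]; exact hμC' t h
        · obtain ⟨s, hs, rfl⟩ := Finset.mem_image.1 h
          rw [hν2 s hs]; exact hSsubC' s hs
    refine ⟨hmatchν, fun ρ hρ => ?_⟩
    have himgρ : T'.image ρ = C' := by
      refine Finset.eq_of_subset_of_card_le (fun c hc => ?_) ?_
      · obtain ⟨t, ht, rfl⟩ := Finset.mem_image.1 hc; exact hρ.2 t ht
      · rw [Finset.card_image_of_injOn hρ.1]; exact le_of_eq hcardC'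
    rw [← Nfun_integral score T' ν, ← Nfun_integral score T' ρ]
    refine MeasureTheory.integral_mono_ae (Nfun_integrable _ _ _) (Nfun_integrable _ _ _) ?_
    have hfin : (score '' ↑(T ∪ C) : Set ℝ).Finite := (T ∪ C).finite_toSet.image _
    have hae := MeasureTheory.measure_eq_zero_iff_ae_notMem.mp (hfin.measure_zero MeasureTheory.volume)
    filter_upwards [hae] with x hx
    have hgood : ∀ u ∈ T ∪ C, score u ≠ x := fun u hu h => hx ⟨u, Finset.mem_coe.2 hu, h⟩
    have habs : ∀ t ∈ T, |(if score t < x then (1:ℝ) else 0) -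
        (if score (μ t) < x then (1:ℝ) else 0)| = pairFn (score t) (score (μ t)) x :=
      fun t ht => chi_abs (hgood t (Finset.mem_union_left _ ht))
        (hgood (μ t) (Finset.mem_union_right _ (hmapμ t ht)))
    -- the flipped grouping has the same crossing function as μ
    have hNre : Nfun score T' ν x = Nfun score T μ x := by
      unfold Nfun
      rw [hT', Finset.sum_union hdisj2, Finset.sum_image hinjμS]
      have e1 : ∑ t ∈ T \ S, pairFn (score t) (score (ν t)) x
          = ∑ t ∈ T \ S, pairFn (score t) (score (μ t)) x :=
        Finset.sum_congr rfl fun t ht => by rw [hν1 t ht]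
      have e2 : ∑ s ∈ S, pairFn (score (μ s)) (score (ν (μ s))) x
          = ∑ s ∈ S, pairFn (score s) (score (μ s)) x :=
        Finset.sum_congr rfl fun s hs => by rw [hν2 s hs, pairFn_comm]
      rw [e1, e2, Finset.sum_sdiff hS]
    -- key identity: the crossing function of μ equals the count discrepancy
    have hTsum : (∑ u ∈ T', if score u < x then (1:ℝ) else 0)
        = (∑ t ∈ T \ S, if score t < x then (1:ℝ) else 0)
          + ∑ s ∈ S, if score (μ s) < x then (1:ℝ) else 0 := by
      rw [hT', Finset.sum_union hdisj2, Finset.sum_image hinjμS]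
    have hCsum : (∑ u ∈ C', if score u < x then (1:ℝ) else 0)
        = (∑ s ∈ S, if score s < x then (1:ℝ) else 0)
          + ∑ t ∈ T \ S, if score (μ t) < x then (1:ℝ) else 0 := by
      rw [hC'eq, Finset.sum_union hdisj3,
        Finset.sum_image fun a ha b hb h => hinjμ (Finset.mem_coe.2 (Finset.mem_sdiff.1 ha).1)
          (Finset.mem_coe.2 (Finset.mem_sdiff.1 hb).1) h]
    have hD : (∑ u ∈ T', if score u < x then (1:ℝ) else 0)
          - (∑ u ∈ C', if score u < x then (1:ℝ) else 0)
        = ∑ t ∈ T, (if t ∈ S then (-1:ℝ) else 1) *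
            ((if score t < x then (1:ℝ) else 0) - (if score (μ t) < x then (1:ℝ) else 0)) := by
      rw [hTsum, hCsum, ← Finset.sum_sdiff hS (f := fun t => (if t ∈ S then (-1:ℝ) else 1) *
        ((if score t < x then (1:ℝ) else 0) - (if score (μ t) < x then (1:ℝ) else 0)))]
      have e1 : ∑ t ∈ T \ S, (if t ∈ S then (-1:ℝ) else 1) *
            ((if score t < x then (1:ℝ) else 0) - (if score (μ t) < x then (1:ℝ) else 0))
          = ∑ t ∈ T \ S, ((if score t < x then (1:ℝ) else 0)
            - (if score (μ t) < x then (1:ℝ) else 0)) :=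
        Finset.sum_congr rfl fun t ht => by rw [if_neg (Finset.mem_sdiff.1 ht).2, one_mul]
      have e2 : ∑ t ∈ S, (if t ∈ S then (-1:ℝ) else 1) *
            ((if score t < x then (1:ℝ) else 0) - (if score (μ t) < x then (1:ℝ) else 0))
          = ∑ t ∈ S, (-1:ℝ) * ((if score t < x then (1:ℝ) else 0)
            - (if score (μ t) < x then (1:ℝ) else 0)) :=
        Finset.sum_congr rfl fun t ht => by rw [if_pos ht]
      rw [e1, e2]
      simp only [neg_one_mul, neg_sub, Finset.sum_sub_distrib]
      ring
    have hkey : |(∑ u ∈ T', if score u < x then (1:ℝ) else 0)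
        - ∑ u ∈ C', if score u < x then (1:ℝ) else 0| = Nfun score T μ x := by
      rw [hD]
      by_cases hex : ∃ t ∈ T, min (score t) (score (μ t)) < x ∧ x < max (score t) (score (μ t))
      · obtain ⟨t0, ht0, hcr0⟩ := hex
        have hpf0 : pairFn (score t0) (score (μ t0)) x = 1 := by
          rw [pairFn_apply, if_pos hcr0]
        have hclaim : ∀ t ∈ T, (if t ∈ S then (-1:ℝ) else 1) *
              ((if score t < x then (1:ℝ) else 0) - (if score (μ t) < x then (1:ℝ) else 0))
            = ((if t0 ∈ S then (-1:ℝ) else 1) *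
              ((if score t0 < x then (1:ℝ) else 0) - (if score (μ t0) < x then (1:ℝ) else 0)))
              * pairFn (score t) (score (μ t)) x := by
          intro t ht
          by_cases hcr : min (score t) (score (μ t)) < x ∧ x < max (score t) (score (μ t))
          · have hpf : pairFn (score t) (score (μ t)) x = 1 := by rw [pairFn_apply, if_pos hcr]
            rcases eq_or_ne t t0 with rfl | hne
            · rw [hpf, mul_one]
            · have hct : (if score t < x then (1:ℝ) else 0) - (if score (μ t) < x then (1:ℝ) else 0)
                  = (if score t0 < x then (1:ℝ) else 0)
                    - (if score (μ t0) < x then (1:ℝ) else 0) := by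
                rcases cross_cases hcr.1 hcr.2 with ⟨ha, hb⟩ | ⟨ha, hb⟩ <;>
                  rcases cross_cases hcr0.1 hcr0.2 with ⟨ha0, hb0⟩ | ⟨ha0, hb0⟩
                · rw [if_pos ha, if_pos ha0, if_neg (not_lt.2 hb.le), if_neg (not_lt.2 hb0.le)]
                · exact (no_opposite score T C μ hopt ht ht0 ha hb ha0 hb0).elim
                · exact (no_opposite score T C μ hopt ht0 ht ha0 hb0 ha hb).elim
                · rw [if_pos ha, if_pos ha0, if_neg (not_lt.2 hb.le), if_neg (not_lt.2 hb0.le)]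
              have hiff : t ∈ S ↔ t0 ∈ S := by
                have hadj' := hadj t t0 ht ht0 hne x hcr.1 hcr.2 hcr0.1 hcr0.2
                exact ⟨fun h => hclosed ⟨t, ht⟩ ⟨t0, ht0⟩ h hadj'.reachable,
                  fun h => hclosed ⟨t0, ht0⟩ ⟨t, ht⟩ h hadj'.symm.reachable⟩
              have hw : (if t ∈ S then (-1:ℝ) else 1) = (if t0 ∈ S then (-1:ℝ) else 1) :=
                if_congr hiff rfl rfl
              rw [hpf, mul_one, hct, hw]
          · have hpf : pairFn (score t) (score (μ t)) x = 0 := by rw [pairFn_apply, if_neg hcr]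
            have hc0 : (if score t < x then (1:ℝ) else 0)
                - (if score (μ t) < x then (1:ℝ) else 0) = 0 := by
              have := habs t ht
              rw [hpf] at this
              exact abs_eq_zero.1 this
            rw [hpf, mul_zero, hc0, mul_zero]
        rw [Finset.sum_congr rfl hclaim, ← Finset.mul_sum, abs_mul, abs_mul]
        have hcabs : |(if score t0 < x then (1:ℝ) else 0)
            - (if score (μ t0) < x then (1:ℝ) else 0)| = 1 := by rw [habs t0 ht0, hpf0]
        have hwabs : |(if t0 ∈ S then (-1:ℝ) else 1)| = 1 := by split <;> simp
        rw [hwabs, hcabs, one_mul, one_mul,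
          abs_of_nonneg (Finset.sum_nonneg fun t _ => pairFn_nonneg _ _ _)]
        rfl
      · have hzero : ∀ t ∈ T, pairFn (score t) (score (μ t)) x = 0 := by
          intro t ht
          rw [pairFn_apply, if_neg fun hc => hex ⟨t, ht, hc⟩]
        have hsum0 : ∑ t ∈ T, (if t ∈ S then (-1:ℝ) else 1) *
            ((if score t < x then (1:ℝ) else 0)
              - (if score (μ t) < x then (1:ℝ) else 0)) = 0 := by
          refine Finset.sum_eq_zero fun t ht => ?_
          have hc0 : (if score t < x then (1:ℝ) else 0)
              - (if score (μ t) < x then (1:ℝ) else 0) = 0 := by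
            have := habs t ht
            rw [hzero t ht] at this
            exact abs_eq_zero.1 this
          rw [hc0, mul_zero]
        rw [hsum0]
        unfold Nfun
        rw [Finset.sum_eq_zero hzero]
        simp
    have hlb := lower_bound score T' C' ρ hρ himgρ
      (fun u hu => hgood u (by
        rcases Finset.mem_union.1 hu with h | h
        · exact hT'sub h
        · exact Finset.mem_sdiff.1 (hC' ▸ h) |>.1))
    rw [hNre, ← hkey]
    exact hlb
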